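/- For r = c = m = 1, 2 the MacMahon product formula gives 2 and 20 respectively; in general the product ∏_{i=1}^{r} ∏_{j=1}^{m} (c+i+j−1)/(i+j−1) is always a positive integer. -/

import Mathlib

open Finset

/-! ### Arithmetic preliminaries: sums of floors -/

/-- `Σ_{k<n} ⌊k/q⌋`. -/
def floorSum (q n : ℕ) : ℕ := ∑ k ∈ Finset.range n, k / q

lemma floorSum_id (q : ℕ) (hq : 0 < q) (n : ℕ) :
    (2*q*(floorSum q n) + q*n : ℤ) = (n:ℤ)^2 + (n % q : ℕ) * ((q:ℤ) - (n % q : ℕ)) := by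
  induction n with
  | zero => simp [floorSum]
  | succ n ih =>
    have hv : n % q < q := Nat.mod_lt _ hq
    have hn : q * (n / q) + n % q = n := Nat.div_add_mod n q
    have hsum : (floorSum q (n+1) : ℤ) = floorSum q n + (n / q : ℕ) := by
      simp [floorSum, Finset.sum_range_succ]
    rcases Nat.lt_or_ge (n % q + 1) q with h | h
    · have hmod : (n+1) % q = n % q + 1 := by
        conv_lhs => rw [← hn, add_assoc, Nat.mul_add_mod]
        exact Nat.mod_eq_of_lt h
      rw [hsum, hmod]
      generalize hud : (n / q : ℕ) = u at hn ⊢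
      generalize hvd : (n % q : ℕ) = v at hn ih ⊢
      have hnZ : (q:ℤ) * u + v = n := by exact_mod_cast hn
      push_cast
      linear_combination ih + 2*hnZ
    · have h' : n % q + 1 = q := by omega
      have hn' : n + 1 = q * (n / q) + q := by omega
      have hmod : (n+1) % q = 0 := by rw [hn', Nat.mul_add_mod, Nat.mod_self]
      rw [hsum, hmod]
      generalize hud : (n / q : ℕ) = u at hn ⊢
      generalize hvd : (n % q : ℕ) = v at hn ih h' ⊢
      have hnZ : (q:ℤ) * u + v = n := by exact_mod_cast hn
      have hZ : (v:ℤ) + 1 = q := by exact_mod_cast h'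
      push_cast
      linear_combination ih + 2*hnZ - ((v:ℤ)+1) * hZ

set_option maxHeartbeats 1000000 in
lemma key_mod (q x y z : ℤ) (hq : 0 < q) (hx : 0 ≤ x) (hx' : x < q)
    (hy : 0 ≤ y) (hy' : y < q) (hz : 0 ≤ z) (hz' : z < q) :
    (x+y) % q * (q - (x+y) % q) + (y+z) % q * (q - (y+z) % q) + (z+x) % q * (q - (z+x) % q)
      ≤ (x+y+z) % q * (q - (x+y+z) % q) + (x*(q-x) + y*(q-y) + z*(q-z)) := by
  have pair : ∀ a b : ℤ, 0 ≤ a → a < q → 0 ≤ b → b < q →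
      a + b < q ∧ (a+b) % q = a+b ∨ q ≤ a + b ∧ (a+b) % q = a+b-q := by
    intro a b ha ha' hb hb'
    rcases lt_or_ge (a+b) q with h | h
    · exact Or.inl ⟨h, Int.emod_eq_of_lt (by linarith) h⟩
    · refine Or.inr ⟨h, ?_⟩
      conv_lhs => rw [show a+b = (a+b-q)+q*1 by ring]
      rw [Int.add_mul_emod_self_left]
      exact Int.emod_eq_of_lt (by linarith) (by linarith)
  have trip : (x+y+z < q ∧ (x+y+z) % q = x+y+z) ∨
      (q ≤ x+y+z ∧ x+y+z < 2*q ∧ (x+y+z) % q = x+y+z-q) ∨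
      (2*q ≤ x+y+z ∧ (x+y+z) % q = x+y+z-2*q) := by
    rcases lt_or_ge (x+y+z) q with h | h
    · exact Or.inl ⟨h, Int.emod_eq_of_lt (by linarith) h⟩
    rcases lt_or_ge (x+y+z) (2*q) with h2 | h2
    · refine Or.inr (Or.inl ⟨h, h2, ?_⟩)
      conv_lhs => rw [show x+y+z = (x+y+z-q)+q*1 by ring]
      rw [Int.add_mul_emod_self_left]
      exact Int.emod_eq_of_lt (by linarith) (by linarith)
    · refine Or.inr (Or.inr ⟨h2, ?_⟩)
      conv_lhs => rw [show x+y+z = (x+y+z-2*q)+q*2 by ring]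
      rw [Int.add_mul_emod_self_left]
      exact Int.emod_eq_of_lt (by linarith) (by linarith)
  rcases pair x y hx hx' hy hy' with ⟨b1, h1⟩ | ⟨b1, h1⟩ <;>
  rcases pair y z hy hy' hz hz' with ⟨b2, h2⟩ | ⟨b2, h2⟩ <;>
  rcases pair z x hz hz' hx hx' with ⟨b3, h3⟩ | ⟨b3, h3⟩ <;>
  rcases trip with ⟨b4, h4⟩ | ⟨b4, b4', h4⟩ | ⟨b4, h4⟩ <;>
  rw [h1, h2, h3, h4] <;>
  nlinarith [mul_nonneg hq.le hx, mul_nonneg hq.le hy, mul_nonneg hq.le hz,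
    mul_nonneg hq.le (sub_nonneg.2 hx'.le), mul_nonneg hq.le (sub_nonneg.2 hy'.le),
    mul_nonneg hq.le (sub_nonneg.2 hz'.le)]

lemma floorSum_ineq (q : ℕ) (hq : 0 < q) (a b c : ℕ) :
    floorSum q (a+b) + floorSum q (b+c) + floorSum q (c+a)
      ≤ floorSum q (a+b+c) + floorSum q a + floorSum q b + floorSum q c := by
  have hqZ : (0:ℤ) < q := by exact_mod_cast hq
  have key := key_mod q ((a:ℤ) % q) ((b:ℤ) % q) ((c:ℤ) % q) hqZ
    (Int.emod_nonneg _ hqZ.ne') (Int.emod_lt_of_pos _ hqZ)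
    (Int.emod_nonneg _ hqZ.ne') (Int.emod_lt_of_pos _ hqZ)
    (Int.emod_nonneg _ hqZ.ne') (Int.emod_lt_of_pos _ hqZ)
  have ma : ((a:ℤ) % q) ≡ (a:ℤ) [ZMOD q] := Int.emod_emod_of_dvd _ dvd_rfl
  have mb : ((b:ℤ) % q) ≡ (b:ℤ) [ZMOD q] := Int.emod_emod_of_dvd _ dvd_rfl
  have mc : ((c:ℤ) % q) ≡ (c:ℤ) [ZMOD q] := Int.emod_emod_of_dvd _ dvd_rfl
  rw [show ((a:ℤ)%q + (b:ℤ)%q) % q = ((a:ℤ)+b) % q from ma.add mb,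
      show ((b:ℤ)%q + (c:ℤ)%q) % q = ((b:ℤ)+c) % q from mb.add mc,
      show ((c:ℤ)%q + (a:ℤ)%q) % q = ((c:ℤ)+a) % q from mc.add ma,
      show ((a:ℤ)%q + (b:ℤ)%q + (c:ℤ)%q) % q = ((a:ℤ)+b+c) % q from (ma.add mb).add mc]
    at key
  have i1 := floorSum_id q hq (a+b)
  have i2 := floorSum_id q hq (b+c)
  have i3 := floorSum_id q hq (c+a)
  have i4 := floorSum_id q hq (a+b+c)
  have i5 := floorSum_id q hq a
  have i6 := floorSum_id q hq b
  have i7 := floorSum_id q hq c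
  push_cast at i1 i2 i3 i4 i5 i6 i7
  have H2 : 2*(q:ℤ) * (floorSum q (a+b) + floorSum q (b+c) + floorSum q (c+a))
      ≤ 2*(q:ℤ) * (floorSum q (a+b+c) + floorSum q a + floorSum q b + floorSum q c) := by
    linarith [key, i1, i2, i3, i4, i5, i6, i7]
  have H3 := le_of_mul_le_mul_left H2 (by linarith : (0:ℤ) < 2*q)
  exact_mod_cast H3

/-! ### Hyperfactorials -/

/-- hyperfactorial `∏_{k<n} k!` -/
def hyperfac (n : ℕ) : ℕ := ∏ k ∈ Finset.range n, Nat.factorial k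

lemma hyperfac_pos (n : ℕ) : 0 < hyperfac n :=
  Finset.prod_pos fun k _ => Nat.factorial_pos k

lemma hyperfac_val (p : ℕ) (hp : p.Prime) (b n : ℕ) (hnb : n ≤ b) :
    (hyperfac n).factorization p = ∑ i ∈ Finset.Ico 1 b, floorSum (p^i) n := by
  haveI : Fact p.Prime := ⟨hp⟩
  rw [hyperfac, Nat.factorization_prod (fun k _ => (Nat.factorial_pos k).ne')]
  rw [Finset.sum_apply']
  have : ∀ k ∈ Finset.range n, (Nat.factorial k).factorization p
      = ∑ i ∈ Finset.Ico 1 b, k / p^i := by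
    intro k hk
    rw [Nat.factorization_def _ hp]
    exact padicValNat_factorial (lt_of_le_of_lt (Nat.log_le_self p k)
      (lt_of_lt_of_le (Finset.mem_range.mp hk) hnb))
  rw [Finset.sum_congr rfl this, Finset.sum_comm]
  rfl

lemma main_dvd (c m r : ℕ) :
    hyperfac (c+m) * hyperfac (c+r) * hyperfac (m+r)
      ∣ hyperfac (c+m+r) * hyperfac c * hyperfac m * hyperfac r := by
  have h0 : ∀ n, hyperfac n ≠ 0 := fun n => (hyperfac_pos n).ne'
  rw [← Nat.factorization_le_iff_dvd (by simp [Nat.mul_ne_zero, h0])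
    (by simp [Nat.mul_ne_zero, h0])]
  rw [Finsupp.le_def]
  intro p
  by_cases hp : p.Prime
  · have fmul : ∀ a b' : ℕ, a ≠ 0 → b' ≠ 0 →
        (a*b').factorization p = a.factorization p + b'.factorization p := by
      intro a b' ha hb; rw [Nat.factorization_mul ha hb]; rfl
    rw [fmul _ _ (Nat.mul_ne_zero (h0 _) (h0 _)) (h0 _), fmul _ _ (h0 _) (h0 _),
        fmul _ _ (Nat.mul_ne_zero (Nat.mul_ne_zero (h0 _) (h0 _)) (h0 _)) (h0 _),
        fmul _ _ (Nat.mul_ne_zero (h0 _) (h0 _)) (h0 _), fmul _ _ (h0 _) (h0 _)]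
    rw [hyperfac_val p hp (c+m+r+1) (c+m) (by omega),
        hyperfac_val p hp (c+m+r+1) (c+r) (by omega),
        hyperfac_val p hp (c+m+r+1) (m+r) (by omega),
        hyperfac_val p hp (c+m+r+1) (c+m+r) (by omega),
        hyperfac_val p hp (c+m+r+1) c (by omega),
        hyperfac_val p hp (c+m+r+1) m (by omega),
        hyperfac_val p hp (c+m+r+1) r (by omega)]
    rw [← Finset.sum_add_distrib, ← Finset.sum_add_distrib, ← Finset.sum_add_distrib,
        ← Finset.sum_add_distrib, ← Finset.sum_add_distrib]
    apply Finset.sum_le_sum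
    intro i _
    have h := floorSum_ineq (p^i) (pow_pos hp.pos i) c m r
    rw [Nat.add_comm r c] at h
    omega
  · simp [Nat.factorization_eq_zero_of_not_prime _ hp]

/-! ### The MacMahon numerator and denominator -/

/-- numerator/denominator products of MacMahon's formula (shifted indices). -/
def boxNum (c r m : ℕ) : ℕ := ∏ i ∈ Finset.range r, ∏ j ∈ Finset.range m, (c+i+j+1)

lemma boxNum_pos (c r m : ℕ) : 0 < boxNum c r m :=
  Finset.prod_pos fun i _ => Finset.prod_pos fun j _ => by omega

lemma fact_prod (a m : ℕ) :
    Nat.factorial a * ∏ j ∈ Finset.range m, (a+j+1) = Nat.factorial (a+m) := by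
  induction m with
  | zero => simp
  | succ m ih =>
    rw [Finset.prod_range_succ, ← mul_assoc, ih, show a+(m+1) = (a+m)+1 from rfl,
      Nat.factorial_succ, mul_comm]

lemma hf_prod (c r : ℕ) :
    hyperfac c * ∏ i ∈ Finset.range r, Nat.factorial (c+i) = hyperfac (c+r) := by
  induction r with
  | zero => simp
  | succ r ih =>
    rw [Finset.prod_range_succ, ← mul_assoc, ih, show c+(r+1) = (c+r)+1 from rfl]
    simp [hyperfac, Finset.prod_range_succ]

lemma boxNum_rel (c r m : ℕ) :
    boxNum c r m * hyperfac (c+r) * hyperfac (c+m) = hyperfac c * hyperfac (c+m+r) := by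
  have P1 : boxNum c r m * ∏ i ∈ Finset.range r, Nat.factorial (c+i)
      = ∏ i ∈ Finset.range r, Nat.factorial (c+i+m) := by
    rw [boxNum, ← Finset.prod_mul_distrib]
    refine Finset.prod_congr rfl fun i _ => ?_
    rw [mul_comm, fact_prod]
  have P2 : ∏ i ∈ Finset.range r, Nat.factorial (c+i+m)
      = ∏ i ∈ Finset.range r, Nat.factorial (c+m+i) :=
    Finset.prod_congr rfl fun i _ => by rw [add_right_comm]
  calc boxNum c r m * hyperfac (c+r) * hyperfac (c+m)
      = (boxNum c r m * ∏ i ∈ Finset.range r, Nat.factorial (c+i))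
          * (hyperfac c * hyperfac (c+m)) := by
        rw [← hf_prod c r]; ring
    _ = (∏ i ∈ Finset.range r, Nat.factorial (c+m+i)) * (hyperfac c * hyperfac (c+m)) := by
        rw [P1, P2]
    _ = hyperfac c * (hyperfac (c+m) * ∏ i ∈ Finset.range r, Nat.factorial (c+m+i)) := by ring
    _ = hyperfac c * hyperfac (c+m+r) := by rw [hf_prod (c+m) r]

lemma boxNum_dvd (c r m : ℕ) : boxNum 0 r m ∣ boxNum c r m := by
  have hA := boxNum_rel c r m
  have hB := boxNum_rel 0 r m
  simp only [Nat.zero_add] at hB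
  have hK : 0 < hyperfac (c+m) * hyperfac (c+r) * hyperfac m * hyperfac r :=
    mul_pos (mul_pos (mul_pos (hyperfac_pos _) (hyperfac_pos _)) (hyperfac_pos _)) (hyperfac_pos _)
  have h1 : boxNum 0 r m * (hyperfac (c+m) * hyperfac (c+r) * hyperfac m * hyperfac r)
      ∣ boxNum c r m * (hyperfac (c+m) * hyperfac (c+r) * hyperfac m * hyperfac r) := by
    have eL : boxNum 0 r m * (hyperfac (c+m) * hyperfac (c+r) * hyperfac m * hyperfac r)
        = (hyperfac 0 * hyperfac (m+r)) * (hyperfac (c+m) * hyperfac (c+r)) := by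
      calc boxNum 0 r m * (hyperfac (c+m) * hyperfac (c+r) * hyperfac m * hyperfac r)
          = (boxNum 0 r m * hyperfac r * hyperfac m) * (hyperfac (c+m) * hyperfac (c+r)) := by
            ring
        _ = (hyperfac 0 * hyperfac (m+r)) * (hyperfac (c+m) * hyperfac (c+r)) := by rw [hB]
    have eR : boxNum c r m * (hyperfac (c+m) * hyperfac (c+r) * hyperfac m * hyperfac r)
        = (hyperfac c * hyperfac (c+m+r)) * (hyperfac m * hyperfac r) := by
      calc boxNum c r m * (hyperfac (c+m) * hyperfac (c+r) * hyperfac m * hyperfac r)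
          = (boxNum c r m * hyperfac (c+r) * hyperfac (c+m)) * (hyperfac m * hyperfac r) := by
            ring
        _ = (hyperfac c * hyperfac (c+m+r)) * (hyperfac m * hyperfac r) := by rw [hA]
    rw [eL, eR]
    have := main_dvd c m r
    calc hyperfac 0 * hyperfac (m+r) * (hyperfac (c+m) * hyperfac (c+r))
        = hyperfac (c+m) * hyperfac (c+r) * hyperfac (m+r) * hyperfac 0 := by ring
      _ ∣ hyperfac (c+m+r) * hyperfac c * hyperfac m * hyperfac r * hyperfac 0 :=
          mul_dvd_mul_right this _
      _ = hyperfac c * hyperfac (c+m+r) * (hyperfac m * hyperfac r) := by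
          simp [hyperfac]; ring
  exact (Nat.mul_dvd_mul_iff_right hK).mp h1

/-- MacMahon's product `P(r,c,m) = ∏_{i=1}^{r} ∏_{j=1}^{m} (c+i+j−1)/(i+j−1)`, as a rational
number. -/
def macmahon (r c m : ℕ) : ℚ :=
  ∏ i ∈ Finset.Icc 1 r, ∏ j ∈ Finset.Icc 1 m, ((c : ℚ) + i + j - 1) / ((i : ℚ) + j - 1)

lemma macmahon_eq (r c m : ℕ) :
    macmahon r c m = (boxNum c r m : ℚ) / (boxNum 0 r m : ℚ) := by
  have step : macmahon r c m
      = ∏ i ∈ Finset.range r, ∏ j ∈ Finset.range m,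
          (((c+i+j+1 : ℕ)):ℚ)/(((0+i+j+1:ℕ)):ℚ) := by
    rw [macmahon, ← Finset.Ico_add_one_right_eq_Icc, Finset.prod_Ico_eq_prod_range]
    refine Finset.prod_congr (by norm_num) fun i _ => ?_
    rw [← Finset.Ico_add_one_right_eq_Icc, Finset.prod_Ico_eq_prod_range]
    refine Finset.prod_congr (by norm_num) fun j _ => ?_
    push_cast
    rw [show (c:ℚ)+(1+i)+(1+j)-1 = c+i+j+1 by ring, show ((1:ℚ)+i)+(1+j)-1 = 0+i+j+1 by ring]
  rw [step, boxNum, boxNum]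
  push_cast
  rw [Finset.prod_congr rfl fun (i : ℕ) _ => Finset.prod_div_distrib _ _, Finset.prod_div_distrib]

/-- `P(1,1,1) = 2`, `P(2,2,2) = 20`, and for all positive `r, c, m` the product
`P(r,c,m)` is a (positive) natural number. -/
theorem stmt_6 :
    macmahon 1 1 1 = 2 ∧ macmahon 2 2 2 = 20 ∧
    ∀ r c m : ℕ, 1 ≤ r → 1 ≤ c → 1 ≤ m →
      ∃ N : ℕ, 0 < N ∧ macmahon r c m = N := by
  refine ⟨?_, ?_, ?_⟩
  · rw [macmahon_eq]
    rw [show boxNum 1 1 1 = 2 by decide, show boxNum 0 1 1 = 1 by decide]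
    norm_num
  · rw [macmahon_eq]
    rw [show boxNum 2 2 2 = 240 by decide, show boxNum 0 2 2 = 12 by decide]
    norm_num
  · intro r c m _ _ _
    obtain ⟨N, hN⟩ := boxNum_dvd c r m
    refine ⟨N, ?_, ?_⟩
    · have := boxNum_pos c r m
      have := boxNum_pos 0 r m
      rcases Nat.eq_zero_or_pos N with h | h
      · rw [h, Nat.mul_zero] at hN; omega
      · exact h
    · rw [macmahon_eq, hN]
      push_cast
      rw [mul_comm, mul_div_assoc, div_self (by exact_mod_cast (boxNum_pos 0 r m).ne'), mul_one]
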